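/- Let C = {x ∈ ℝ² : x₂ ≥ (2/3)|x₁|^{3/2}} and λ̄ = (0,0). Then the outer second-order tangent set T²_C(λ̄, p) is empty for p = (1, 0) and for p = (−1, 0). -/

import Mathlib

/-- The outer second-order tangent set `T²_C(x, h)`: `w ∈ T²_C(x,h)` iff there are
`t_k ↓ 0` and `r^k → w` with `x + t_k h + (t_k²/2) r^k ∈ C`. -/
def secondOrderTangentSet (C : Set (Fin 2 → ℝ)) (x h : Fin 2 → ℝ) : Set (Fin 2 → ℝ) :=
  {w | ∃ t : ℕ → ℝ, (∀ k, 0 < t k) ∧ Filter.Tendsto t Filter.atTop (nhds 0) ∧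
    ∃ rs : ℕ → Fin 2 → ℝ, Filter.Tendsto rs Filter.atTop (nhds w) ∧
      ∀ k, x + t k • h + ((t k) ^ 2 / 2) • rs k ∈ C}

set_option maxHeartbeats 800000 in
lemma key_empty (a : ℝ) (ha : |a| = 1) :
    secondOrderTangentSet {x : Fin 2 → ℝ | (2 / 3) * |x 0| ^ ((3 : ℝ) / 2) ≤ x 1} 0 ![a, 0]
      = ∅ := by
  ext w
  simp only [Set.mem_empty_iff_false, iff_false]
  rintro ⟨t, ht0, htlim, rs, hrs, hmem⟩
  set M : ℝ := ‖w‖ + 1 with hMdef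
  have hM : 0 < M := by positivity
  have hMw : ‖w‖ ≤ M := by simp [hMdef]
  clear_value M
  have h1 : ∀ᶠ k in Filter.atTop, ‖rs k - w‖ < 1 := by
    have := hrs.eventually (Metric.ball_mem_nhds w one_pos)
    simpa [dist_eq_norm] using this
  have hδ : 0 < min (1 / M) (2 / (9 * M ^ 2)) := by positivity
  have h2 : ∀ᶠ k in Filter.atTop, |t k| < min (1 / M) (2 / (9 * M ^ 2)) := by
    have := htlim.eventually (Metric.ball_mem_nhds 0 hδ)
    simpa [dist_eq_norm, Real.norm_eq_abs] using this
  obtain ⟨k, hk1, hk2⟩ := (h1.and h2).exists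
  have htk : 0 < t k := ht0 k
  have habs : |t k| = t k := abs_of_pos htk
  have htk1 : t k < 1 / M := by
    have := lt_of_lt_of_le hk2 (min_le_left _ _); rwa [habs] at this
  have htk2 : t k < 2 / (9 * M ^ 2) := by
    have := lt_of_lt_of_le hk2 (min_le_right _ _); rwa [habs] at this
  have hr0 : |rs k 0| ≤ M := by
    have h := norm_le_pi_norm (rs k - w) 0
    have hw := norm_le_pi_norm w 0
    simp only [Pi.sub_apply, Real.norm_eq_abs] at h hw
    have tri : |rs k 0| ≤ |rs k 0 - w 0| + |w 0| := by
      have := abs_add_le (rs k 0 - w 0) (w 0); simpa using this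
    linarith [lt_of_le_of_lt h hk1]
  have hr1 : rs k 1 ≤ M := by
    have h := norm_le_pi_norm (rs k - w) 1
    have hw := norm_le_pi_norm w 1
    simp only [Pi.sub_apply, Real.norm_eq_abs] at h hw
    have := abs_le.mp (le_of_lt (lt_of_le_of_lt h hk1))
    have := abs_le.mp (le_trans hw (le_of_eq rfl))
    linarith [le_abs_self (rs k 1), le_abs_self (w 1)]
  have hmem' := hmem k
  simp only [Set.mem_setOf_eq, Pi.add_apply, Pi.smul_apply, Pi.zero_apply,
    Matrix.cons_val_zero, Matrix.cons_val_one, Matrix.head_cons, smul_eq_mul,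
    mul_zero, add_zero, zero_add] at hmem'
  -- hmem' : 2/3 * |t k * a + (t k ^ 2 / 2) * rs k 0| ^ (3/2) ≤ (t k ^ 2 / 2) * rs k 1
  set x0 : ℝ := t k * a + (t k ^ 2 / 2) * rs k 0 with hx0
  have hB : t k / 2 ≤ |x0| := by
    have tri : |t k * a| ≤ |x0| + |(t k ^ 2 / 2) * rs k 0| := by
      have := abs_add_le x0 (-(t k ^ 2 / 2 * rs k 0))
      simp only [hx0] at this ⊢
      rw [abs_neg] at this
      calc |t k * a| = |t k * a + t k ^ 2 / 2 * rs k 0 + -(t k ^ 2 / 2 * rs k 0)| := by ring_nf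
        _ ≤ _ := this
    rw [abs_mul, ha, mul_one, abs_of_pos htk, abs_mul] at tri
    have hq : |t k ^ 2 / 2| = t k ^ 2 / 2 := abs_of_nonneg (by positivity)
    rw [hq] at tri
    have h2' : t k ^ 2 / 2 * |rs k 0| ≤ t k ^ 2 / 2 * M :=
      mul_le_mul_of_nonneg_left hr0 (by positivity)
    have hMt : t k * M < 1 := by
      rw [lt_div_iff₀ hM] at htk1; linarith
    nlinarith
  have hC : (t k / 2) ^ ((3:ℝ)/2) ≤ |x0| ^ ((3:ℝ)/2) :=
    Real.rpow_le_rpow (by positivity) hB (by norm_num)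
  set s : ℝ := Real.sqrt (t k / 2) with hs
  have hspos : 0 < s := Real.sqrt_pos.mpr (by positivity)
  have hs2 : s ^ 2 = t k / 2 := Real.sq_sqrt (by positivity)
  have hD : (t k / 2) ^ ((3:ℝ)/2) = s ^ 3 := by
    rw [← hs2, ← Real.rpow_natCast s 2, ← Real.rpow_mul hspos.le]
    norm_num
  clear_value s x0
  have hE : (t k ^ 2 / 2) * rs k 1 ≤ t k ^ 2 / 2 * M :=
    mul_le_mul_of_nonneg_left hr1 (by positivity)
  have hfinal : 2 / 3 * s ^ 3 ≤ t k ^ 2 / 2 * M := by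
    calc 2 / 3 * s ^ 3 = 2 / 3 * (t k / 2) ^ ((3:ℝ)/2) := by rw [hD]
      _ ≤ 2 / 3 * |x0| ^ ((3:ℝ)/2) := by nlinarith
      _ ≤ (t k ^ 2 / 2) * rs k 1 := hmem'
      _ ≤ _ := hE
  have hsk : 9 * M ^ 2 * s ^ 2 < 1 := by
    rw [hs2]
    rw [lt_div_iff₀ (by positivity : (0:ℝ) < 9 * M ^ 2)] at htk2
    nlinarith
  have htks : t k = 2 * s ^ 2 := by rw [hs2]; ring
  have hx : 0 < 3 * M * s := by positivity
  have h3 : 3 * M * s < 1 := by nlinarith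
  have htk4 : t k ^ 2 / 2 * M = 2 * M * s ^ 4 := by rw [htks]; ring
  have hlt : 2 * M * s ^ 4 < 2 / 3 * s ^ 3 := by nlinarith [pow_pos hspos 3]
  rw [htk4] at hfinal
  linarith

/-- for `C = {x : x₂ ≥ (2/3)|x₁|^{3/2}}` and `λ̄ = (0,0)`, the outer
second-order tangent sets in the directions `(1,0)` and `(−1,0)` are empty. -/
theorem stmt_17 :
    secondOrderTangentSet {x : Fin 2 → ℝ | (2 / 3) * |x 0| ^ ((3 : ℝ) / 2) ≤ x 1} 0 ![1, 0] = ∅ ∧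
    secondOrderTangentSet {x : Fin 2 → ℝ | (2 / 3) * |x 0| ^ ((3 : ℝ) / 2) ≤ x 1} 0 ![-1, 0] = ∅ := by
  exact ⟨key_empty 1 (by norm_num), key_empty (-1) (by norm_num)⟩
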